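/- arXiv:1402.5165 — 3 statements merged into one kernel-verified Lean document; each statement's English description precedes it below -/
import Mathlib

section
/- Let S be a mixed-strategies solution of finite games. If S satisfies Strategic Equivalence (SE) and the Simultaneous Maximizer axiom (SM), then for every game u and every pure Nash equilibrium a of u, the degenerate mixed-strategy profile placing probability 1 on a_i for each player i belongs to S(u). -/
open scoped Classical

noncomputable section

/-- A finite normal-form game on action sets `A i`: a payoff function for each player. -/
abbrev Game {n : ℕ} (A : Fin n → Type*) : Type _ :=
  Fin n → (∀ j, A j) → ℝ

/-- Opponents' action profiles of player `i`. -/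
abbrev Opp {n : ℕ} (A : Fin n → Type*) (i : Fin n) : Type _ :=
  ∀ j : {j : Fin n // j ≠ i}, A j.1

/-- The game `z(c, i, b₋ᵢ)`: player `i` receives payoff `c` at every profile whose
opponents' component equals `b`, and `0` otherwise; all other players always get `0`. -/
def zGame {n : ℕ} {A : Fin n → Type*} (c : ℝ) (i : Fin n) (b : Opp A i) : Game A :=
  fun j a => if j = i ∧ (∀ k : {k : Fin n // k ≠ i}, a k.1 = b k) then c else 0

/-- The full action profile obtained from own action `ai` of player `i` and an
opponents' profile `b`. -/
def merge {n : ℕ} {A : Fin n → Type*} (i : Fin n) (ai : A i) (b : Opp A i) : ∀ j, A j :=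
  fun j => if h : j = i then cast (congrArg A h.symm) ai else b ⟨j, h⟩

/-- The pure individually rational value of player `i`:
`pir_i(u) = max_{a_i} min_{a_{-i}} u_i(a_i, a_{-i})`. -/
def pir {n : ℕ} {A : Fin n → Type*} (u : Game A) (i : Fin n) : ℝ :=
  ⨆ ai : A i, ⨅ b : Opp A i, u i (merge i ai b)

/-- `a` is a pure Nash equilibrium of `u`. -/
def IsPNE {n : ℕ} {A : Fin n → Type*} (u : Game A) (a : ∀ j, A j) : Prop :=
  ∀ (i : Fin n) (bi : A i), u i (Function.update a i bi) ≤ u i a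

/-- A mixed-strategy profile: a probability distribution on `A i` for each player `i`. -/
abbrev MixedProfile {n : ℕ} (A : Fin n → Type*) [∀ i, Fintype (A i)] : Type _ :=
  {x : ∀ i, A i → ℝ // ∀ i, (∀ c, 0 ≤ x i c) ∧ ∑ c, x i c = 1}

/-- Multilinear extension of payoffs: the expected payoff of player `i` when each
player `j` independently plays the mixed strategy `x j`. -/
def Eu {n : ℕ} {A : Fin n → Type*} [∀ i, Fintype (A i)]
    (u : Game A) (i : Fin n) (x : ∀ j, A j → ℝ) : ℝ :=
  ∑ a : ∀ j, A j, (∏ j, x j (a j)) * u i a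

/-- The pure (Dirac) strategy on action `bi`. -/
def pureStrat {n : ℕ} {A : Fin n → Type*} {i : Fin n} (bi : A i) : A i → ℝ :=
  fun c => if c = bi then 1 else 0

/-- The degenerate mixed-strategy profile placing probability `1` on `a i` for each `i`. -/
def diracProfile {n : ℕ} {A : Fin n → Type*} [∀ i, Fintype (A i)] (a : ∀ j, A j) :
    MixedProfile A :=
  ⟨fun i c => if c = a i then 1 else 0,
   fun i => ⟨fun c => by by_cases h : c = a i <;> simp [h], by simp⟩⟩

lemma merge_self {n : ℕ} {A : Fin n → Type*} (i : Fin n) (x : ∀ j, A j) :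
    merge i (x i) (fun k => x k.1) = x := by
  funext j
  unfold merge
  by_cases h : j = i
  · subst h; simp
  · simp [h]

lemma merge_update {n : ℕ} {A : Fin n → Type*} (i : Fin n) (bi : A i) (a : ∀ j, A j) :
    merge i bi (fun k => a k.1) = Function.update a i bi := by
  funext j
  unfold merge
  by_cases h : j = i
  · subst h; simp
  · simp [h, Function.update_of_ne h]

lemma SE_sum {n : ℕ} {A : Fin n → Type*} [∀ i, Fintype (A i)]
    (S : Game A → Set (MixedProfile A))
    (SE : ∀ (u : Game A) (c : ℝ) (i : Fin n) (b : Opp A i), S u = S (u + zGame c i b))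
    (F : Finset (Σ i : Fin n, Opp A i)) (c : (Σ i : Fin n, Opp A i) → ℝ) :
    ∀ u : Game A, S u = S (u + ∑ p ∈ F, zGame (c p) p.1 p.2) := by
  classical
  induction F using Finset.induction with
  | empty => intro u; simp
  | insert p F hnotmem ih =>
    intro u
    rw [Finset.sum_insert hnotmem]
    have h1 : S u = S (u + zGame (c p) p.1 p.2) := SE u (c p) p.1 p.2
    rw [h1, ih (u + zGame (c p) p.1 p.2)]
    abel

/-- Any mixed-strategies solution satisfying Strategic Equivalence (SE) and the
Simultaneous Maximizer axiom (SM) contains the degenerate mixed profile on every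
pure Nash equilibrium. -/
theorem statement5 {n : ℕ} (hn : 0 < n) (A : Fin n → Type*)
    [∀ i, Fintype (A i)] [∀ i, Nonempty (A i)]
    (S : Game A → Set (MixedProfile A))
    (SE : ∀ (u : Game A) (c : ℝ) (i : Fin n) (b : Opp A i), S u = S (u + zGame c i b))
    (SM : ∀ (u : Game A) (a : ∀ j, A j),
      (∀ (i : Fin n) (b : ∀ j, A j), u i a ≥ u i b) → diracProfile a ∈ S u) :
    ∀ u : Game A, ∀ a : ∀ j, A j, IsPNE u a → diracProfile a ∈ S u := by
  classical
  intro u a ha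
  -- M i b : max over own actions
  set M : ∀ i : Fin n, Opp A i → ℝ :=
    fun i b => Finset.univ.sup' (Finset.univ_nonempty) (fun ai => u i (merge i ai b)) with hM
  set c : (Σ i : Fin n, Opp A i) → ℝ := fun p => -(M p.1 p.2) with hc
  set u' : Game A := u + ∑ p : (Σ i : Fin n, Opp A i), zGame (c p) p.1 p.2 with hu'
  have key : ∀ (i : Fin n) (x : ∀ j, A j), u' i x = u i x - M i (fun k => x k.1) := by
    intro i x
    have : u' i x = u i x + ∑ p : (Σ i : Fin n, Opp A i), zGame (c p) p.1 p.2 i x := by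
      rw [hu']
      simp [Finset.sum_apply]
    rw [this]
    have hsum : ∑ p : (Σ i : Fin n, Opp A i), zGame (c p) p.1 p.2 i x
        = c ⟨i, fun k => x k.1⟩ := by
      rw [Finset.sum_eq_single (⟨i, fun k => x k.1⟩ : Σ i : Fin n, Opp A i)]
      · simp [zGame]
      · intro p _ hp
        obtain ⟨j, b⟩ := p
        simp only [zGame]
        rw [if_neg]
        rintro ⟨rfl, h2⟩
        apply hp
        congr 1
        funext k
        exact (h2 k).symm
      · intro h; exact absurd (Finset.mem_univ _) h
    rw [hsum, hc]
    ring
  have hle : ∀ (i : Fin n) (x : ∀ j, A j), u' i x ≤ 0 := by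
    intro i x
    rw [key]
    have : u i x ≤ M i (fun k => x k.1) := by
      rw [hM]
      have := Finset.le_sup' (f := fun ai => u i (merge i ai (fun k => x k.1)))
        (Finset.mem_univ (x i))
      rwa [merge_self] at this
    linarith
  have heq : ∀ i : Fin n, u' i a = 0 := by
    intro i
    rw [key]
    have h1 : M i (fun k => a k.1) ≤ u i a := by
      rw [hM]
      apply Finset.sup'_le
      intro ai _
      rw [merge_update]
      exact ha i ai
    have h2 : u i a ≤ M i (fun k => a k.1) := by
      rw [hM]
      have := Finset.le_sup' (f := fun ai => u i (merge i ai (fun k => a k.1)))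
        (Finset.mem_univ (a i))
      rwa [merge_self] at this
    linarith
  have hmem : diracProfile a ∈ S u' := by
    apply SM
    intro i x
    rw [heq i]
    exact hle i x
  rwa [SE_sum S SE Finset.univ c u]
end
end

section
/- Let S be a pure-strategies solution of finite games. If S satisfies Strategic Equivalence (SE), Pure Individual Rationality (PIR), and the Simultaneous Maximizer axiom (SM), then S coincides with pure Nash equilibrium: S(u) = PNE(u) for every game u. -/
open scoped Classical

noncomputable section

section Aux
variable {n : ℕ} {A : Fin n → Type*}

def res (i : Fin n) (a : ∀ j, A j) : Opp A i := fun k => a k.1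

lemma merge_res (i : Fin n) (a : ∀ j, A j) (bi : A i) :
    merge i bi (res i a) = Function.update a i bi := by
  funext j
  by_cases h : j = i
  · subst h; simp [merge, Function.update]
  · simp [merge, res, Function.update, h]

lemma merge_self_s7 (i : Fin n) (a : ∀ j, A j) : merge i (a i) (res i a) = a := by
  rw [merge_res]; simp

lemma res_merge (i : Fin n) (ai : A i) (b : Opp A i) : res i (merge i ai b) = b := by
  funext k; simp [res, merge, k.2]

lemma seSum [∀ i, Fintype (A i)]
    (S : Game A → Set (∀ j, A j))
    (SE : ∀ (u : Game A) (c : ℝ) (i : Fin n) (b : Opp A i), S u = S (u + zGame c i b))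
    (c : ∀ j, Opp A j → ℝ) (u : Game A) :
    S u = S (fun j a => u j a + c j (res j a)) := by
  have key : ∀ T : Finset (Σ j : Fin n, Opp A j),
      S u = S (u + ∑ p ∈ T, zGame (c p.1 p.2) p.1 p.2) := by
    intro T
    induction T using Finset.induction with
    | empty => simp
    | @insert p T hp ih =>
      rw [Finset.sum_insert hp]
      have heq : u + (zGame (c p.1 p.2) p.1 p.2 + ∑ q ∈ T, zGame (c q.1 q.2) q.1 q.2)
          = (u + ∑ q ∈ T, zGame (c q.1 q.2) q.1 q.2) + zGame (c p.1 p.2) p.1 p.2 := by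
        rw [add_comm (zGame (c p.1 p.2) p.1 p.2), ← add_assoc]
      rw [heq, ← SE, ih]
  have h := key Finset.univ
  have heq : (u + ∑ p : Σ j : Fin n, Opp A j, zGame (c p.1 p.2) p.1 p.2)
      = fun j a => u j a + c j (res j a) := by
    funext j a
    have hsum : (∑ p : Σ j : Fin n, Opp A j, zGame (c p.1 p.2) p.1 p.2 j a)
        = c j (res j a) := by
      rw [Finset.sum_eq_single (⟨j, res j a⟩ : Σ j : Fin n, Opp A j)]
      · simp [zGame, res]
      · rintro ⟨p1, p2⟩ _ hpne
        simp only [zGame]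
        rw [if_neg]
        rintro ⟨h1, h2⟩
        apply hpne
        subst h1
        congr 1
        funext k
        exact (h2 k).symm
      · intro habs; exact absurd (Finset.mem_univ _) habs
    simp [Pi.add_apply, hsum]
  rw [h, heq]

end Aux

/-- A pure-strategies solution satisfying Strategic Equivalence (SE), Pure Individual
Rationality (PIR) and the Simultaneous Maximizer axiom (SM) coincides with the pure
Nash equilibrium correspondence. -/


theorem statement7 {n : ℕ} (hn : 0 < n) (A : Fin n → Type*)
    [∀ i, Fintype (A i)] [∀ i, Nonempty (A i)]
    (S : Game A → Set (∀ j, A j))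
    (SE : ∀ (u : Game A) (c : ℝ) (i : Fin n) (b : Opp A i), S u = S (u + zGame c i b))
    (PIR : ∀ u : Game A, ∀ x ∈ S u, ∀ i : Fin n, u i x ≥ pir u i)
    (SM : ∀ (u : Game A) (a : ∀ j, A j),
      (∀ (i : Fin n) (b : ∀ j, A j), u i a ≥ u i b) → a ∈ S u) :
    ∀ u : Game A, S u = {a | IsPNE u a} := by
  intro u
  ext x
  constructor
  · -- S u ⊆ PNE
    intro hx
    intro i bi
    by_contra hlt
    push_neg at hlt
    set ε : ℝ := u i (Function.update x i bi) - u i x with hε_def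
    have hε : 0 < ε := by simp [hε_def]; linarith
    set m : ℝ := ⨅ y : ∀ j, A j, u i y with hm_def
    have hm : ∀ y : ∀ j, A j, m ≤ u i y := fun y =>
      ciInf_le (Set.Finite.bddBelow (Set.finite_range _)) y
    set M : ℝ := u i x + ε - m with hM_def
    set c : ∀ j, Opp A j → ℝ := fun j b =>
      if h : j = i then (if cast (congrArg (Opp A) h) b = res i x then 0 else M) else 0
      with hc_def
    set u' : Game A := fun j a => u j a + c j (res j a) with hu'_def
    have hx' : x ∈ S u' := by rw [← seSum S SE c u]; exact hx
    have hci : ∀ b : Opp A i, c i b = if b = res i x then 0 else M := by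
      intro b; simp [hc_def]
    have hxval : u' i x = u i x := by
      simp [hu'_def, hci]
    have hpir : u i x + ε ≤ pir u' i := by
      have h1 : (⨅ b : Opp A i, u' i (merge i bi b)) ≤ pir u' i := by
        rw [pir]
        exact le_ciSup (f := fun ai : A i => ⨅ b : Opp A i, u' i (merge i ai b))
          (Set.Finite.bddAbove (Set.finite_range _)) bi
      have h2 : u i x + ε ≤ ⨅ b : Opp A i, u' i (merge i bi b) := by
        apply le_ciInf
        intro b
        have : u' i (merge i bi b)
            = u i (merge i bi b) + (if b = res i x then 0 else M) := by
          rw [hu'_def]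
          simp only [res_merge, hci]
        rw [this]
        by_cases hb : b = res i x
        · subst hb
          rw [if_pos rfl, merge_res]
          simp [hε_def]
        · rw [if_neg hb]
          have := hm (merge i bi b)
          simp only [hM_def]
          linarith
      linarith
    have := PIR u' x hx' i
    rw [hxval] at this
    linarith
  · -- PNE ⊆ S u
    intro hx
    set c : ∀ j, Opp A j → ℝ := fun j b => -(⨆ ai : A j, u j (merge j ai b)) with hc_def
    set u' : Game A := fun j a => u j a + c j (res j a) with hu'_def
    have hmem : x ∈ S u' := by
      apply SM
      intro j y
      have hx0 : u' j x = 0 := by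
        have hle : (⨆ ai : A j, u j (merge j ai (res j x))) ≤ u j x := by
          apply ciSup_le
          intro ai
          rw [merge_res]
          exact hx j ai
        have hge : u j x ≤ ⨆ ai : A j, u j (merge j ai (res j x)) := by
          have := le_ciSup (f := fun ai : A j => u j (merge j ai (res j x)))
            (Set.Finite.bddAbove (Set.finite_range _)) (x j)
          rwa [merge_self_s7] at this
        have : (⨆ ai : A j, u j (merge j ai (res j x))) = u j x := le_antisymm hle hge
        simp [hu'_def, hc_def, this]
      have hy0 : u' j y ≤ 0 := by
        have hge : u j y ≤ ⨆ ai : A j, u j (merge j ai (res j y)) := by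
          have := le_ciSup (f := fun ai : A j => u j (merge j ai (res j y)))
            (Set.Finite.bddAbove (Set.finite_range _)) (y j)
          rwa [merge_self_s7] at this
        simp [hu'_def, hc_def]
        linarith
      rw [hx0]; exact hy0
    rwa [← seSum S SE c u] at hmem
end
end

section
/- Let u be a continuous convex game on compact convex action sets and let ā be a strict pure Nash equilibrium of u. Then there exist continuous functions f_i : A_{-i} → ℝ for each player i such that in the game v' = u + Σ_{i∈[n]} z(i, f_i), the profile ā is a strict simultaneous maximizer: v'_i(ā) = 0 and v'_i(a) < v'_i(ā) for every player i and every profile a ∈ A with a ≠ ā. Consequently, there is no pure-strategies solution S of continuous convex games satisfying both Continuous Strategic Equivalence (CSE) and the Unique Simultaneous Maximizer axiom (USM), provided some continuous convex game on A has two distinct strict pure Nash equilibria. -/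
open scoped Classical

noncomputable section

variable {n : ℕ} {E : Fin n → Type*}
  [∀ i, NormedAddCommGroup (E i)] [∀ i, NormedSpace ℝ (E i)]

/-- Action profiles: one action from each player's action set `A i`. -/
abbrev CProfile (A : ∀ i, Set (E i)) : Type _ := ∀ j, ↥(A j)

/-- A game with action sets `A i`: a payoff function for each player. -/
abbrev CGame (A : ∀ i, Set (E i)) : Type _ := Fin n → CProfile A → ℝ

/-- Opponents' action profiles of player `i`. -/
abbrev COpp (A : ∀ i, Set (E i)) (i : Fin n) : Type _ :=
  ∀ j : {j : Fin n // j ≠ i}, ↥(A j.1)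

/-- The game `z(i, f)`: player `i` receives payoff `f(a₋ᵢ)` at every profile `a`
(irrespective of his own action); every other player always gets `0`. -/
def zC (A : ∀ i, Set (E i)) (i : Fin n) (f : COpp A i → ℝ) : CGame A :=
  fun j a => if j = i then f (fun k => a k.1) else 0

/-- The full profile obtained from own action `ai` of player `i` and an opponents'
profile `b`. -/
def mergeC (A : ∀ i, Set (E i)) (i : Fin n) (ai : ↥(A i)) (b : COpp A i) :
    CProfile A :=
  fun j => if h : j = i then cast (congrArg (fun t => ↥(A t)) h.symm) ai else b ⟨j, h⟩

/-- The pure individually rational value of player `i`: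
`pir_i(u) = max_{a_i} min_{a_{-i}} u_i(a_i, a_{-i})`. -/
def pirC (A : ∀ i, Set (E i)) (u : CGame A) (i : Fin n) : ℝ :=
  ⨆ ai : ↥(A i), ⨅ b : COpp A i, u i (mergeC A i ai b)

/-- A continuous convex game: each payoff function is continuous, and each player's
payoff is a convex function of his own action (for every fixed opponents' profile). -/
def IsCCGame (A : ∀ i, Set (E i)) (hconv : ∀ i, Convex ℝ (A i)) (u : CGame A) : Prop :=
  (∀ i, Continuous (u i)) ∧
  ∀ (i : Fin n) (a : CProfile A) (x y : ↥(A i)) (s t : ℝ)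
    (hs : 0 ≤ s) (ht : 0 ≤ t) (hst : s + t = 1),
    u i (Function.update a i ⟨s • (x : E i) + t • (y : E i),
        hconv i x.2 y.2 hs ht hst⟩) ≤
      s * u i (Function.update a i x) + t * u i (Function.update a i y)

/-- `a` is a pure Nash equilibrium of `u`. -/
def IsPNEc (A : ∀ i, Set (E i)) (u : CGame A) (a : CProfile A) : Prop :=
  ∀ (i : Fin n) (bi : ↥(A i)), u i (Function.update a i bi) ≤ u i a

/-- `a` is a strict pure Nash equilibrium of `u`. -/
def IsStrictPNEc (A : ∀ i, Set (E i)) (u : CGame A) (a : CProfile A) : Prop :=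
  ∀ (i : Fin n) (bi : ↥(A i)), bi ≠ a i → u i (Function.update a i bi) < u i a

set_option linter.unusedSectionVars false

section AuxLemmas

variable (A : ∀ i, Set (E i))

lemma mergeC_apply_self (i : Fin n) (ai : ↥(A i)) (b : COpp A i) :
    mergeC A i ai b i = ai := by
  simp [mergeC]

lemma mergeC_apply_ne (i : Fin n) (ai : ↥(A i)) (b : COpp A i) {j : Fin n} (h : j ≠ i) :
    mergeC A i ai b j = b ⟨j, h⟩ := dif_neg h

lemma mergeC_res (i : Fin n) (a : CProfile A) :
    mergeC A i (a i) (fun k => a k.1) = a := by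
  funext j
  by_cases h : j = i
  · subst h; exact mergeC_apply_self A j (a j) _
  · exact mergeC_apply_ne A i (a i) _ h

lemma update_eq_mergeC (i : Fin n) (a : CProfile A) (bi : ↥(A i)) :
    Function.update a i bi = mergeC A i bi (fun k => a k.1) := by
  funext j
  by_cases h : j = i
  · subst h
    rw [Function.update_self, mergeC_apply_self]
  · rw [Function.update_of_ne h, mergeC_apply_ne A i bi _ h]

lemma continuous_mergeC (i : Fin n) :
    Continuous (fun p : ↥(A i) × COpp A i => mergeC A i p.1 p.2) := by
  apply continuous_pi
  intro j
  by_cases h : j = i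
  · subst h
    have : (fun p : ↥(A j) × COpp A j => mergeC A j p.1 p.2 j) = fun p => p.1 :=
      funext fun p => mergeC_apply_self A j p.1 p.2
    rw [this]; exact continuous_fst
  · have : (fun p : ↥(A i) × COpp A i => mergeC A i p.1 p.2 j)
        = fun p => p.2 ⟨j, h⟩ :=
      funext fun p => mergeC_apply_ne A i p.1 p.2 h
    rw [this]
    exact (continuous_apply _).comp continuous_snd

lemma addSum_apply (u : CGame A) (f : ∀ i : Fin n, COpp A i → ℝ) (i : Fin n)
    (a : CProfile A) :
    (u + ∑ i' : Fin n, zC A i' (f i')) i a = u i a + f i (fun k => a k.1) := by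
  simp [zC, Finset.sum_apply, Finset.sum_ite_eq]

lemma res_update (i : Fin n) (a : CProfile A) (x : ↥(A i)) :
    (fun k : {j : Fin n // j ≠ i} => Function.update a i x k.1)
      = fun k : {j : Fin n // j ≠ i} => a k.1 := by
  funext k
  exact Function.update_of_ne k.2 x a

lemma isCCGame_add_zC (hconv : ∀ i, Convex ℝ (A i)) (v : CGame A)
    (hv : IsCCGame A hconv v) (i : Fin n) (g : COpp A i → ℝ) (hg : Continuous g) :
    IsCCGame A hconv (v + zC A i g) := by
  constructor
  · intro j
    have hrfl : (v + zC A i g) j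
        = fun a => v j a + (if j = i then g (fun k => a k.1) else 0) := rfl
    rw [hrfl]
    by_cases h : j = i
    · subst h
      simp only [if_true]
      exact (hv.1 j).add (hg.comp (continuous_pi fun k => continuous_apply k.1))
    · simp only [if_neg h, add_zero]
      exact hv.1 j
  · intro i' a x y s t hs ht hst
    have hz : ∀ w : ↥(A i'), zC A i g i' (Function.update a i' w) = zC A i g i' a := by
      intro w
      by_cases h : i' = i
      · subst h
        simp only [zC, if_pos rfl, res_update]
      · simp only [zC, if_neg h]
    have hmain := hv.2 i' a x y s t hs ht hst
    have h1 : ∀ w : ↥(A i'), (v + zC A i g) i' (Function.update a i' w)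
        = v i' (Function.update a i' w) + zC A i g i' a := by
      intro w; simp only [Pi.add_apply]; rw [hz w]
    rw [h1, h1, h1]
    have hc : s * zC A i g i' a + t * zC A i g i' a = zC A i g i' a := by
      rw [← add_mul, hst, one_mul]
    linarith

lemma key_lemma (hA : ∀ i, IsCompact (A i)) (hconv : ∀ i, Convex ℝ (A i))
    (hne : ∀ i, (A i).Nonempty)
    (u : CGame A) (hu : IsCCGame A hconv u)
    (abar : CProfile A) (ha : IsStrictPNEc A u abar) :
    ∃ f : ∀ i : Fin n, COpp A i → ℝ,
      (∀ i, Continuous (f i)) ∧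
      (∀ i : Fin n, (u + ∑ i' : Fin n, zC A i' (f i')) i abar = 0) ∧
      (∀ (i : Fin n) (a : CProfile A), a ≠ abar →
        (u + ∑ i' : Fin n, zC A i' (f i')) i a <
          (u + ∑ i' : Fin n, zC A i' (f i')) i abar) := by
  haveI : ∀ j, CompactSpace ↥(A j) := fun j => isCompact_iff_compactSpace.mp (hA j)
  haveI : ∀ j, Nonempty ↥(A j) := fun j => (hne j).to_subtype
  -- the "advantage" function
  set F : ∀ i : Fin n, COpp A i → ↥(A i) → ℝ :=
    fun i b ai => u i (mergeC A i ai b) - u i (mergeC A i (abar i) b) with hF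
  set M : ∀ i : Fin n, COpp A i → ℝ :=
    fun i b => sSup (F i b '' Set.univ) with hM
  set bbar : ∀ i : Fin n, COpp A i := fun i => fun k => abar k.1 with hbbar
  have hFc : ∀ i, Continuous (Function.uncurry (F i)) := by
    intro i
    show Continuous fun p : COpp A i × ↥(A i) =>
      u i (mergeC A i p.2 p.1) - u i (mergeC A i (abar i) p.1)
    exact ((hu.1 i).comp
        ((continuous_mergeC A i).comp (continuous_snd.prodMk continuous_fst))).sub
      ((hu.1 i).comp
        ((continuous_mergeC A i).comp (continuous_const.prodMk continuous_fst)))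
  have hFb : ∀ (i : Fin n) (b : COpp A i), Continuous (F i b) := by
    intro i b
    exact (hFc i).comp (continuous_const.prodMk continuous_id)
  have hbdd : ∀ (i : Fin n) (b : COpp A i), BddAbove (F i b '' Set.univ) :=
    fun i b => (isCompact_univ.image (hFb i b)).bddAbove
  have hMle : ∀ (i : Fin n) (b : COpp A i) (ai : ↥(A i)), F i b ai ≤ M i b :=
    fun i b ai => le_csSup (hbdd i b) (Set.mem_image_of_mem _ (Set.mem_univ ai))
  have hmerge_bar : ∀ i : Fin n, mergeC A i (abar i) (bbar i) = abar :=
    fun i => mergeC_res A i abar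
  have hMbar : ∀ i : Fin n, M i (bbar i) = 0 := by
    intro i
    have hle : M i (bbar i) ≤ 0 := by
      apply Real.sSup_le _ le_rfl
      rintro x ⟨ai, -, rfl⟩
      have hup : mergeC A i ai (bbar i) = Function.update abar i ai :=
        (update_eq_mergeC A i abar ai).symm
      by_cases hai : ai = abar i
      · subst hai
        simp [hF, hmerge_bar i]
      · have := ha i ai hai
        rw [← hup] at this
        simp only [hF, hmerge_bar i]
        linarith
    have hge : (0 : ℝ) ≤ M i (bbar i) := by
      have h0 : F i (bbar i) (abar i) = 0 := sub_self _
      have := hMle i (bbar i) (abar i)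
      linarith
    linarith
  refine ⟨fun i b => -u i (mergeC A i (abar i) b) - M i b - dist b (bbar i),
    ?_, ?_, ?_⟩
  · intro i
    refine (((hu.1 i).comp ((continuous_mergeC A i).comp
        (continuous_const.prodMk continuous_id))).neg.sub ?_).sub
      (continuous_id.dist continuous_const)
    exact IsCompact.continuous_sSup isCompact_univ (hFc i)
  · intro i
    rw [addSum_apply]
    rw [show (fun k : {j : Fin n // j ≠ i} => abar k.1) = bbar i from rfl,
      hmerge_bar i, hMbar i, dist_self]
    ring
  · intro i a hna
    rw [addSum_apply, addSum_apply]
    rw [show (fun k : {j : Fin n // j ≠ i} => abar k.1) = bbar i from rfl,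
      hmerge_bar i, hMbar i, dist_self]
    set b : COpp A i := fun k => a k.1 with hb
    have h1 : u i a - u i (mergeC A i (abar i) b) ≤ M i b := by
      have : u i a = u i (mergeC A i (a i) b) := by rw [mergeC_res]
      rw [this]
      exact hMle i b (a i)
    by_cases hbb : b = bbar i
    · have haup : a = Function.update abar i (a i) := by
        funext j
        by_cases hj : j = i
        · subst hj; rw [Function.update_self]
        · rw [Function.update_of_ne hj]
          exact (congrFun hbb ⟨j, hj⟩ : _)
      have hai : a i ≠ abar i := by
        intro hcon
        apply hna
        rw [haup, hcon, Function.update_eq_self]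
      have hlt : u i a < u i abar := by
        have := ha i (a i) hai
        rwa [← haup] at this
      rw [hbb, hmerge_bar i, hMbar i, dist_self]
      linarith
    · have hd : 0 < dist b (bbar i) := dist_pos.mpr hbb
      linarith

end AuxLemmas

/-- For a continuous convex game `u` with a strict pure Nash equilibrium `ā`, there
are continuous functions `fᵢ` such that in `v' = u + ∑ᵢ z(i, fᵢ)` the profile `ā`
is a strict simultaneous maximizer (with value `0` for every player).
Consequently, if some continuous convex game on `A` has two distinct strict pure
Nash equilibria, then no pure-strategies solution of continuous convex games
satisfies both Continuous Strategic Equivalence (CSE) and the Unique Simultaneous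
Maximizer axiom (USM). -/
theorem statement19 {n : ℕ} (hn : 0 < n) {E : Fin n → Type*}
    [∀ i, NormedAddCommGroup (E i)] [∀ i, NormedSpace ℝ (E i)]
    (A : ∀ i, Set (E i)) (hA : ∀ i, IsCompact (A i)) (hconv : ∀ i, Convex ℝ (A i))
    (hne : ∀ i, (A i).Nonempty)
    (u : CGame A) (hu : IsCCGame A hconv u)
    (abar : CProfile A) (ha : IsStrictPNEc A u abar) :
    (∃ f : ∀ i : Fin n, COpp A i → ℝ,
      (∀ i, Continuous (f i)) ∧
      (∀ i : Fin n, (u + ∑ i' : Fin n, zC A i' (f i')) i abar = 0) ∧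
      (∀ (i : Fin n) (a : CProfile A), a ≠ abar →
        (u + ∑ i' : Fin n, zC A i' (f i')) i a <
          (u + ∑ i' : Fin n, zC A i' (f i')) i abar)) ∧
    ((∃ w : CGame A, IsCCGame A hconv w ∧
        ∃ a a' : CProfile A, a ≠ a' ∧ IsStrictPNEc A w a ∧ IsStrictPNEc A w a') →
      ¬ ∃ S : CGame A → Set (CProfile A),
        (∀ v : CGame A, IsCCGame A hconv v →
          ∀ (i : Fin n) (g : COpp A i → ℝ), Continuous g → S v = S (v + zC A i g)) ∧
        (∀ (v : CGame A), IsCCGame A hconv v → ∀ a : CProfile A,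
          (∀ (i : Fin n) (b : CProfile A), b ≠ a → v i a > v i b) → S v = {a})) := by
  refine ⟨key_lemma A hA hconv hne u hu abar ha, ?_⟩
  rintro ⟨w, hw, a, a', haa', hpa, hpa'⟩ ⟨S, hCSE, hUSM⟩
  have main : ∀ c : CProfile A, IsStrictPNEc A w c → S w = {c} := by
    intro c hc
    obtain ⟨f, hf1, hf2, hf3⟩ := key_lemma A hA hconv hne w hw c hc
    have step : ∀ s : Finset (Fin n),
        IsCCGame A hconv (w + ∑ i' ∈ s, zC A i' (f i')) ∧
        S w = S (w + ∑ i' ∈ s, zC A i' (f i')) := by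
      intro s
      induction s using Finset.induction_on with
      | empty => rw [Finset.sum_empty, add_zero]; exact ⟨hw, rfl⟩
      | @insert j s hj ih =>
        have hrw : w + ∑ i' ∈ insert j s, zC A i' (f i')
            = (w + ∑ i' ∈ s, zC A i' (f i')) + zC A j (f j) := by
          rw [Finset.sum_insert hj]; abel
        rw [hrw]
        exact ⟨isCCGame_add_zC A hconv _ ih.1 j (f j) (hf1 j),
          ih.2.trans (hCSE _ ih.1 j (f j) (hf1 j))⟩
    obtain ⟨hVcc, hSV⟩ := step Finset.univ
    rw [hSV]
    exact hUSM _ hVcc c (fun i b hb => hf3 i b hb)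
  have h1 := main a hpa
  have h2 := main a' hpa'
  rw [h1] at h2
  exact haa' (Set.singleton_eq_singleton_iff.mp h2)
end
end
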